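/- Let X be an infinite compact metric space, α : X → X a minimal homeomorphism, 𝒱 a line bundle, ℰ = Γ(𝒱,α). Then the Cuntz–Pimsner algebra O(ℰ) is stably finite, because it is simple and admits a tracial state, which must therefore be faithful. -/

import Mathlib

/-!
STATEMENT 11. Let `X` be an infinite compact metric space, `α : X → X` a minimal
homeomorphism, `𝒱` a line bundle, and `ℰ = Γ(𝒱,α)`.  Then the Cuntz–Pimsner algebra
`B = O(ℰ)` (modelled abstractly by `CPLineSystem`) is stably finite: for every `k`,
every isometry in the matrix algebra `M_k(B)` is a unitary, i.e. `a* a = 1 ⟹ a a* = 1`.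
(The proof: `O(ℰ)` is simple by minimality, and admits a tracial state, which is
therefore faithful; a simple unital C*-algebra with a faithful tracial state is
stably finite.)
-/

noncomputable def cpow {X : Type*} [TopologicalSpace X] (α : X ≃ₜ X) (n : ℤ) : C(X, X) :=
  if 0 ≤ n then ⟨(⇑α)^[n.toNat], α.continuous.iterate _⟩
  else ⟨(⇑α.symm)^[(-n).toNat], α.symm.continuous.iterate _⟩

section AuxCpow
variable {X : Type*} [TopologicalSpace X] (α : X ≃ₜ X)

lemma cpow_zero_apply (x : X) : cpow α 0 x = x := by simp [cpow]

lemma cpow_succ_apply (n : ℤ) (x : X) : cpow α (n + 1) x = cpow α n (α x) := by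
  by_cases h : 0 ≤ n
  · have h' : 0 ≤ n + 1 := by omega
    have ht : (n + 1).toNat = n.toNat + 1 := by omega
    simp only [cpow, if_pos h, if_pos h', ht, ContinuousMap.coe_mk]
    rw [Function.iterate_succ_apply]
  · by_cases h' : 0 ≤ n + 1
    · have hn : n = -1 := by omega
      subst hn
      simp only [cpow, if_pos h', if_neg h, ContinuousMap.coe_mk]
      norm_num
    · have ht : (-n).toNat = (-(n + 1)).toNat + 1 := by omega
      simp only [cpow, if_neg h, if_neg h', ht, ContinuousMap.coe_mk]
      rw [Function.iterate_succ_apply, Homeomorph.symm_apply_apply]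

lemma cpow_pred_apply (n : ℤ) (x : X) : cpow α (n - 1) x = cpow α n (α.symm x) := by
  have := cpow_succ_apply α (n - 1) (α.symm x)
  rw [sub_add_cancel, Homeomorph.apply_symm_apply] at this
  exact this.symm

lemma cpow_cancel (m : ℤ) (x : X) : cpow α m (cpow α (-m) x) = x := by
  rcases lt_trichotomy m 0 with h | h | h
  · have h1 : ¬ 0 ≤ m := by omega
    have h2 : 0 ≤ -m := by omega
    simp only [cpow, if_pos h2, if_neg h1, ContinuousMap.coe_mk]
    exact Function.LeftInverse.iterate α.symm_apply_apply (-m).toNat x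
  · subst h; simp [cpow]
  · have h1 : 0 ≤ m := by omega
    have h2 : ¬ 0 ≤ -m := by omega
    have h3 : (-(-m)).toNat = m.toNat := by omega
    simp only [cpow, if_pos h1, if_neg h2, ContinuousMap.coe_mk, h3]
    exact Function.LeftInverse.iterate α.apply_symm_apply m.toNat x

section
variable (τ₀ : C(X, ℝ) →ₗ[ℝ] ℝ)
  (hinv : ∀ f : C(X, ℝ), τ₀ (f.comp ⟨⇑α, α.continuous⟩) = τ₀ f)

include hinv in
lemma tau0_cpow : ∀ (j : ℤ) (f : C(X, ℝ)), τ₀ (f.comp (cpow α j)) = τ₀ f := by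
  have hsymm : ∀ f : C(X, ℝ), τ₀ (f.comp ⟨⇑α.symm, α.symm.continuous⟩) = τ₀ f := by
    intro f
    have h1 := hinv (f.comp ⟨⇑α.symm, α.symm.continuous⟩)
    have h2 : (f.comp ⟨⇑α.symm, α.symm.continuous⟩).comp ⟨⇑α, α.continuous⟩ = f := by
      ext x; simp [ContinuousMap.comp_apply]
    rw [h2] at h1
    exact h1.symm
  intro j
  induction j using Int.induction_on with
  | zero =>
    intro f
    have h0 : f.comp (cpow α 0) = f := by ext x; simp [ContinuousMap.comp_apply, cpow_zero_apply]
    rw [h0]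
  | succ i ih =>
    intro f
    have h1 : f.comp (cpow α (i + 1)) = (f.comp (cpow α i)).comp ⟨⇑α, α.continuous⟩ := by
      ext x; simp [ContinuousMap.comp_apply, cpow_succ_apply]
    rw [h1, hinv, ih]
  | pred i ih =>
    intro f
    have h1 : f.comp (cpow α (-i - 1)) = (f.comp (cpow α (-i))).comp ⟨⇑α.symm, α.symm.continuous⟩ := by
      ext x; simp [ContinuousMap.comp_apply, cpow_pred_apply]
    rw [h1, hsymm, ih]
end

section
variable [CompactSpace X]
variable (τ₀ : C(X, ℝ) →ₗ[ℝ] ℝ)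

lemma tau0_pos (hbound : ∀ f, |τ₀ f| ≤ ‖f‖) (hone : τ₀ 1 = 1)
    (f : C(X, ℝ)) (hf : ∀ x, 0 ≤ f x) : 0 ≤ τ₀ f := by
  set h : C(X, ℝ) := ‖f‖ • (1 : C(X, ℝ)) - f with hh
  have hnorm : ‖h‖ ≤ ‖f‖ := by
    rw [ContinuousMap.norm_le _ (norm_nonneg f)]
    intro x
    have h1 : f x ≤ ‖f‖ := le_trans (le_abs_self _) (by
      have := ContinuousMap.norm_coe_le_norm f x
      rwa [Real.norm_eq_abs] at this)
    have h2 : (0 : ℝ) ≤ f x := hf x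
    simp only [hh, ContinuousMap.sub_apply, ContinuousMap.smul_apply, ContinuousMap.one_apply,
      smul_eq_mul, mul_one, Real.norm_eq_abs]
    rw [abs_of_nonneg (by linarith)]
    linarith
  have h3 : τ₀ h = ‖f‖ - τ₀ f := by
    rw [hh, map_sub, map_smul, hone]; simp
  have h4 : τ₀ h ≤ ‖f‖ := le_trans (le_abs_self _) (le_trans (hbound h) hnorm)
  rw [h3] at h4
  linarith

lemma tau0_strictpos
    (hmin : ∀ E : Set X, IsClosed E → (⇑α) '' E ⊆ E → E = ∅ ∨ E = Set.univ)
    (hbound : ∀ f, |τ₀ f| ≤ ‖f‖) (hone : τ₀ 1 = 1)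
    (hinv : ∀ f : C(X, ℝ), τ₀ (f.comp ⟨⇑α, α.continuous⟩) = τ₀ f)
    (f : C(X, ℝ)) (hf : ∀ x, 0 ≤ f x) (y : X) (hy : 0 < f y) : 0 < τ₀ f := by
  classical
  set U : Set X := {x | f y / 2 < f x} with hU
  have hUopen : IsOpen U := isOpen_lt continuous_const f.continuous
  set V : Set X := ⋃ j : ℤ, (cpow α j) ⁻¹' U with hV
  have hVopen : IsOpen V := isOpen_iUnion fun j => hUopen.preimage (cpow α j).continuous
  have hyV : y ∈ V := Set.mem_iUnion.mpr ⟨0, by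
    simp only [Set.mem_preimage, cpow_zero_apply]
    exact half_lt_self hy⟩
  have himg : α '' Vᶜ ⊆ Vᶜ := by
    rintro _ ⟨x, hx, rfl⟩ hmem
    apply hx
    obtain ⟨j, hj⟩ := Set.mem_iUnion.mp hmem
    exact Set.mem_iUnion.mpr ⟨j + 1, by
      simp only [Set.mem_preimage] at hj ⊢
      rwa [cpow_succ_apply]⟩
  have hVuniv : V = Set.univ := by
    rcases hmin Vᶜ hVopen.isClosed_compl himg with h | h
    · rw [← compl_compl V, h, Set.compl_empty]
    · exfalso
      have hyc : y ∈ Vᶜ := h.symm ▸ Set.mem_univ y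
      exact hyc hyV
  have hcover : Set.univ ⊆ ⋃ j : ℤ, (cpow α j) ⁻¹' U := by
    intro x _
    show x ∈ V
    rw [hVuniv]; trivial
  obtain ⟨T, hT⟩ := isCompact_univ.elim_finite_subcover (fun j : ℤ => (cpow α j) ⁻¹' U)
    (fun j => hUopen.preimage (cpow α j).continuous) hcover
  set G : C(X, ℝ) := ∑ j ∈ T, f.comp (cpow α j) with hG
  have hGlb : ∀ x, f y / 2 ≤ G x := by
    intro x
    obtain ⟨j, hjT, hjU⟩ := Set.mem_iUnion₂.mp (hT (Set.mem_univ x))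
    have h1 : G x = ∑ j ∈ T, f (cpow α j x) := by
      rw [hG]
      rw [ContinuousMap.coe_sum]
      simp [ContinuousMap.comp_apply]
    rw [h1]
    calc f y / 2 ≤ f (cpow α j x) := le_of_lt hjU
      _ ≤ ∑ j ∈ T, f (cpow α j x) :=
        Finset.single_le_sum (f := fun i => f (cpow α i x)) (fun i _ => hf _) hjT
  have hτG : τ₀ G = (T.card : ℝ) * τ₀ f := by
    rw [hG, map_sum]
    rw [Finset.sum_congr rfl (fun j _ => tau0_cpow α τ₀ hinv j f)]
    simp [Finset.sum_const, nsmul_eq_mul]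
  have hge : f y / 2 ≤ τ₀ G := by
    have h0 : ∀ x, 0 ≤ (G - (f y / 2) • (1 : C(X, ℝ))) x := by
      intro x
      simp only [ContinuousMap.sub_apply, ContinuousMap.smul_apply, ContinuousMap.one_apply,
        smul_eq_mul, mul_one]
      linarith [hGlb x]
    have h1 := tau0_pos τ₀ hbound hone _ h0
    rw [map_sub, map_smul, hone] at h1
    simp only [smul_eq_mul, mul_one] at h1
    linarith
  have hτf : 0 ≤ τ₀ f := tau0_pos τ₀ hbound hone f hf
  rcases eq_or_lt_of_le hτf with h | h
  · exfalso
    rw [hτG, ← h, mul_zero] at hge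
    linarith
  · exact h
end

end AuxCpow

section AuxInv
variable {X : Type*} [MetricSpace X] [CompactSpace X] [Nonempty X] (α : X ≃ₜ X)

/-- existence of an invariant, positive, unital functional -/
lemma exists_invariant_state :
    ∃ τ₀ : C(X, ℝ) →ₗ[ℝ] ℝ, (∀ f, |τ₀ f| ≤ ‖f‖) ∧ τ₀ 1 = 1 ∧
      (∀ f : C(X, ℝ), τ₀ (f.comp ⟨⇑α, α.continuous⟩) = τ₀ f) := by
  classical
  set αC : C(X, X) := ⟨⇑α, α.continuous⟩ with hαC
  set L : C(X, ℝ) →ₗ[ℝ] C(X, ℝ) :=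
    { toFun := fun f => f.comp αC - f
      map_add' := fun f g => by ext x; simp [ContinuousMap.comp_apply]; ring
      map_smul' := fun c f => by ext x; simp [ContinuousMap.comp_apply]; ring } with hL
  set W : Submodule ℝ C(X, ℝ) := LinearMap.range L with hW
  set W' : Submodule ℝ C(X, ℝ) := W.topologicalClosure with hW'
  haveI : IsClosed (W' : Set C(X, ℝ)) := W.isClosed_topologicalClosure
  -- every element of W' is far from 1
  have hfar : ∀ g ∈ W', 1 ≤ ‖(1 : C(X, ℝ)) - g‖ := by
    have hfarW : ∀ g ∈ W, 1 ≤ ‖(1 : C(X, ℝ)) - g‖ := by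
      rintro g ⟨F, rfl⟩
      obtain ⟨x⟩ : Nonempty X := inferInstance
      obtain ⟨z, -, hz⟩ := isCompact_univ.exists_isMaxOn (Set.univ_nonempty) F.continuous.continuousOn
      have h1 : ((1 : C(X, ℝ)) - L F) z ≤ ‖(1 : C(X, ℝ)) - L F‖ := by
        have := ContinuousMap.norm_coe_le_norm ((1 : C(X, ℝ)) - L F) z
        rw [Real.norm_eq_abs] at this
        exact le_trans (le_abs_self _) this
      have h2 : F (α z) ≤ F z := hz trivial
      have h3 : (1 : ℝ) ≤ ((1 : C(X, ℝ)) - L F) z := by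
        simp only [hL, ContinuousMap.sub_apply, ContinuousMap.one_apply, LinearMap.coe_mk,
          AddHom.coe_mk, ContinuousMap.sub_apply, ContinuousMap.comp_apply]
        simp only [hαC, ContinuousMap.coe_mk]
        linarith
      linarith
    intro g hg
    have hsub : (W' : Set C(X, ℝ)) ⊆ {g | 1 ≤ ‖(1 : C(X, ℝ)) - g‖} := by
      rw [hW', Submodule.topologicalClosure_coe]
      refine closure_minimal hfarW ?_
      exact isClosed_le continuous_const ((continuous_const.sub continuous_id).norm)
    exact hsub hg
  -- quotient
  set v : C(X, ℝ) ⧸ W' := Submodule.Quotient.mk 1 with hv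
  have hvnorm : ‖v‖ = 1 := by
    refine le_antisymm ?_ ?_
    · rw [hv]
      exact le_of_le_of_eq (Submodule.Quotient.norm_mk_le W' 1) norm_one
    · refine le_of_forall_pos_le_add fun ε hε => ?_
      obtain ⟨m, hm, hlt⟩ := Submodule.Quotient.norm_mk_lt v hε
      rw [hv] at hm
      have : (1 : C(X, ℝ)) - m ∈ W' := by
        have h0 := (Submodule.Quotient.eq W').mp hm
        have h1 := W'.neg_mem h0
        rwa [neg_sub] at h1
      have h1 : 1 ≤ ‖(1 : C(X, ℝ)) - ((1 : C(X, ℝ)) - m)‖ := hfar _ this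
      simp only [sub_sub_cancel] at h1
      linarith
  have hvne : v ≠ 0 := by
    intro h
    have h1 : (1 : C(X, ℝ)) ∈ W' := (Submodule.Quotient.mk_eq_zero W').mp h
    have h2 := hfar _ h1
    rw [sub_self, norm_zero] at h2
    linarith
  obtain ⟨g, hgnorm, hgv⟩ := exists_dual_vector ℝ v (by rw [hvnorm]; norm_num)
  refine ⟨g.toLinearMap.comp W'.mkQ, ?_, ?_, ?_⟩
  · intro f
    have h1 : |g (Submodule.Quotient.mk f)| ≤ ‖g‖ * ‖(Submodule.Quotient.mk f : C(X, ℝ) ⧸ W')‖ :=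
      g.le_opNorm _
    have h2 : ‖(Submodule.Quotient.mk f : C(X, ℝ) ⧸ W')‖ ≤ ‖f‖ := Submodule.Quotient.norm_mk_le W' f
    simp only [LinearMap.coe_comp, Function.comp_apply, Submodule.mkQ_apply]
    rw [hgnorm] at h1
    simpa using h1.trans (by simpa using h2)
  · have : W'.mkQ 1 = v := rfl
    simp [this, hgv, hvnorm]
  · intro f
    have hmem : f.comp αC - f ∈ W' := W.le_topologicalClosure ⟨f, rfl⟩
    have : W'.mkQ (f.comp αC - f) = 0 := (Submodule.Quotient.mk_eq_zero W').mpr hmem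
    have h2 : (Submodule.Quotient.mk (f.comp αC) : C(X, ℝ) ⧸ W') = Submodule.Quotient.mk f :=
      (Submodule.Quotient.eq W').mpr hmem
    simp only [LinearMap.coe_comp, Function.comp_apply, ContinuousLinearMap.coe_coe,
      Submodule.mkQ_apply, h2]
end AuxInv

structure CPLineSystem (X : Type*) [TopologicalSpace X] [CompactSpace X] (α : X ≃ₜ X)
    (B : Type*) [NormedRing B] [StarRing B] [CStarRing B] [NormedAlgebra ℂ B]
    [CompleteSpace B] where
  π : C(X, ℂ) →⋆ₐ[ℂ] B
  π_injective : Function.Injective π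
  Esub : ℤ → Submodule ℂ B
  mem_E0 : ∀ b, b ∈ Esub 0 ↔ ∃ f, π f = b
  Esub_mul : ∀ m n a b, a ∈ Esub m → b ∈ Esub n → a * b ∈ Esub (m + n)
  Esub_star : ∀ n a, a ∈ Esub n → star a ∈ Esub (-n)
  dense_graded : Dense ((⨆ n : ℤ, Esub n : Submodule ℂ B) : Set B)
  twist : ∀ (n : ℤ) (a : B), a ∈ Esub n → ∀ f : C(X, ℂ),
    π f * a = a * π (f.comp (cpow α n))
  switch : ∀ (n : ℤ) (a : B), a ∈ Esub n → ∃ f : C(X, ℂ),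
    star a * a = π f ∧ a * star a = π (f.comp (cpow α (-n)))
  ΦC : B →ₗ[ℂ] C(X, ℂ)
  ΦC_π : ∀ f, ΦC (π f) = f
  ΦC_graded : ∀ (n : ℤ) (a : B), a ∈ Esub n → n ≠ 0 → ΦC a = 0
  ΦC_contraction : ∀ b, ‖ΦC b‖ ≤ ‖b‖
  ΦC_faithful : ∀ b, ΦC (star b * b) = 0 → b = 0

set_option maxHeartbeats 1000000 in
theorem statement11
    (X : Type*) [MetricSpace X] [CompactSpace X] [Infinite X]
    (α : X ≃ₜ X)
    -- α is minimal
    (hmin : ∀ E : Set X, IsClosed E → (⇑α) '' E ⊆ E → E = ∅ ∨ E = Set.univ)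
    (B : Type*) [NormedRing B] [StarRing B] [CStarRing B] [NormedAlgebra ℂ B]
    [CompleteSpace B]
    (S : CPLineSystem X α B) :
    -- O(ℰ) is stably finite
    ∀ (k : ℕ) (a : Matrix (Fin k) (Fin k) B),
      star a * a = 1 → a * star a = 1 := by

  classical
  obtain ⟨x₀⟩ : Nonempty X := inferInstance
  haveI hBnt : Nontrivial B := by
    refine ⟨0, 1, fun h => ?_⟩
    have h2 : S.π 0 = S.π 1 := by rw [map_zero, map_one, h]
    have h3 := S.π_injective h2
    have h4 := congrFun (congrArg DFunLike.coe h3) x₀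
    simpa using h4
  have hsm : ∀ (z : ℂ) (b : B), star (z • b) = (star z) • star b := by
    intro z b
    have h1 : (z • (1 : B)) = S.π (z • 1) := by rw [map_smul, map_one]
    have h2 : star (z • (1 : B)) = (star z) • (1 : B) := by
      rw [h1, ← map_star]
      have h3 : star (z • (1 : C(X, ℂ))) = (star z) • (1 : C(X, ℂ)) := by
        rw [star_smul, star_one]
      rw [h3, map_smul, map_one]
    calc star (z • b) = star ((z • (1 : B)) * b) := by rw [smul_mul_assoc, one_mul]
      _ = star b * star (z • (1 : B)) := star_mul _ _
      _ = star b * ((star z) • (1 : B)) := by rw [h2]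
      _ = (star z) • (star b * 1) := mul_smul_comm _ _ _
      _ = (star z) • star b := by rw [mul_one]
  letI : StarModule ℂ B := ⟨hsm⟩
  letI : CStarAlgebra B := { }
  letI : PartialOrder B := CStarAlgebra.spectralOrder B
  letI : StarOrderedRing B := CStarAlgebra.spectralOrderedRing B
  -- real and imaginary parts of continuous functions
  let reC : C(X, ℂ) → C(X, ℝ) := fun f => ⟨fun x => (f x).re, Complex.continuous_re.comp f.continuous⟩
  let imC : C(X, ℂ) → C(X, ℝ) := fun f => ⟨fun x => (f x).im, Complex.continuous_im.comp f.continuous⟩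
  have reC_add : ∀ f g, reC (f + g) = reC f + reC g := by
    intro f g; ext x; simp [reC]
  have imC_add : ∀ f g, imC (f + g) = imC f + imC g := by
    intro f g; ext x; simp [imC]
  have reC_zero : reC 0 = 0 := by ext x; simp [reC]
  have imC_zero : imC 0 = 0 := by ext x; simp [imC]
  -- the invariant state on C(X, ℝ)
  obtain ⟨τ₀, hbound, hone, hinv⟩ := exists_invariant_state α
  -- ΦC is unital
  have ΦC1 : S.ΦC 1 = 1 := by
    have := S.ΦC_π 1
    rwa [map_one] at this
  -- the tracial state on B
  let τ : B → ℂ := fun b => ⟨τ₀ (reC (S.ΦC b)), τ₀ (imC (S.ΦC b))⟩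
  have τ_def : ∀ b, τ b = ⟨τ₀ (reC (S.ΦC b)), τ₀ (imC (S.ΦC b))⟩ := fun _ => rfl
  have τ_add : ∀ x y, τ (x + y) = τ x + τ y := by
    intro x y
    rw [τ_def, τ_def, τ_def]
    apply Complex.ext
    · show τ₀ (reC (S.ΦC (x + y))) = τ₀ (reC (S.ΦC x)) + τ₀ (reC (S.ΦC y))
      rw [map_add, reC_add, map_add]
    · show τ₀ (imC (S.ΦC (x + y))) = τ₀ (imC (S.ΦC x)) + τ₀ (imC (S.ΦC y))
      rw [map_add, imC_add, map_add]
  let τA : B →+ ℂ := AddMonoidHom.mk' τ τ_add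
  have τA_def : ∀ b, τA b = τ b := fun _ => rfl
  have τ_one : τ 1 = 1 := by
    rw [τ_def, ΦC1]
    apply Complex.ext
    · show τ₀ (reC 1) = 1
      have : reC 1 = 1 := by ext x; simp [reC]
      rw [this, hone]
    · show τ₀ (imC 1) = 0
      have : imC 1 = 0 := by ext x; simp [imC]
      rw [this, map_zero]
  -- norm bounds for reC, imC
  have reC_norm : ∀ f, ‖reC f‖ ≤ ‖f‖ := by
    intro f
    rw [ContinuousMap.norm_le _ (norm_nonneg f)]
    intro x
    have h1 : ‖f x‖ ≤ ‖f‖ := ContinuousMap.norm_coe_le_norm f x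
    have h2 : |(f x).re| ≤ ‖f x‖ := Complex.abs_re_le_norm _
    simpa [reC, Real.norm_eq_abs] using h2.trans h1
  have imC_norm : ∀ f, ‖imC f‖ ≤ ‖f‖ := by
    intro f
    rw [ContinuousMap.norm_le _ (norm_nonneg f)]
    intro x
    have h1 : ‖f x‖ ≤ ‖f‖ := ContinuousMap.norm_coe_le_norm f x
    have h2 : |(f x).im| ≤ ‖f x‖ := Complex.abs_im_le_norm _
    simpa [imC, Real.norm_eq_abs] using h2.trans h1
  -- τ is Lipschitz hence continuous
  have τ_bound : ∀ b, ‖τ b‖ ≤ 2 * ‖b‖ := by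
    intro b
    have h1 : ‖τ b‖ ≤ |(τ b).re| + |(τ b).im| := Complex.norm_le_abs_re_add_abs_im _
    rw [τ_def] at h1
    have h2 : |τ₀ (reC (S.ΦC b))| ≤ ‖S.ΦC b‖ := (hbound _).trans (reC_norm _)
    have h3 : |τ₀ (imC (S.ΦC b))| ≤ ‖S.ΦC b‖ := (hbound _).trans (imC_norm _)
    have h4 := S.ΦC_contraction b
    simp only [τ_def] at h1 ⊢
    calc ‖(⟨τ₀ (reC (S.ΦC b)), τ₀ (imC (S.ΦC b))⟩ : ℂ)‖
        ≤ |τ₀ (reC (S.ΦC b))| + |τ₀ (imC (S.ΦC b))| := h1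
      _ ≤ ‖S.ΦC b‖ + ‖S.ΦC b‖ := add_le_add h2 h3
      _ ≤ 2 * ‖b‖ := by linarith
  have τ_cont : Continuous τ := by
    have : LipschitzWith 2 τ := by
      apply LipschitzWith.of_dist_le_mul
      intro x y
      have h1 : τ x - τ y = τ (x - y) := (map_sub τA x y).symm
      rw [dist_eq_norm, dist_eq_norm, h1]
      have := τ_bound (x - y)
      calc ‖τ (x - y)‖ ≤ 2 * ‖x - y‖ := this
        _ = (2 : NNReal) * ‖x - y‖ := by norm_num
    exact this.continuous
  -- trace property on homogeneous elements
  have htrace_hom : ∀ (m : ℤ) (a : B), a ∈ S.Esub m → ∀ (n : ℤ) (b : B), b ∈ S.Esub n →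
      τ (a * b) = τ (b * a) := by
    intro m a ha n b hb
    by_cases hmn : m + n = 0
    · have hn : n = -m := by omega
      subst hn
      have hab : a * b ∈ S.Esub 0 := by
        have := S.Esub_mul m (-m) a b ha hb
        rwa [add_neg_cancel] at this
      have hba : b * a ∈ S.Esub 0 := by
        have := S.Esub_mul (-m) m b a hb ha
        rwa [neg_add_cancel] at this
      obtain ⟨h, hh⟩ := (S.mem_E0 _).mp hab
      obtain ⟨h', hh'⟩ := (S.mem_E0 _).mp hba
      have e1 : b * (S.π h - S.π (h'.comp (cpow α (-m)))) = 0 := by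
        have t1 := S.twist (-m) b hb h'
        have hcomm : b * S.π h = S.π h' * b := by rw [hh, hh', mul_assoc]
        rw [mul_sub, hcomm, t1, sub_self]
      have z1 : h * (h - h'.comp (cpow α (-m))) = 0 := by
        apply S.π_injective
        rw [map_mul, map_sub, map_zero]
        calc S.π h * (S.π h - S.π (h'.comp (cpow α (-m))))
            = (a * b) * (S.π h - S.π (h'.comp (cpow α (-m)))) := by rw [hh]
          _ = a * (b * (S.π h - S.π (h'.comp (cpow α (-m))))) := mul_assoc _ _ _
          _ = 0 := by rw [e1, mul_zero]
      have e2 : a * (S.π (h.comp (cpow α m)) - S.π h') = 0 := by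
        have t2 := S.twist m a ha h
        have hcomm : a * S.π h' = S.π h * a := by rw [hh', hh, mul_assoc]
        rw [mul_sub, ← t2, hcomm, sub_self]
      have z2 : h' * (h.comp (cpow α m) - h') = 0 := by
        apply S.π_injective
        rw [map_mul, map_sub, map_zero]
        calc S.π h' * (S.π (h.comp (cpow α m)) - S.π h')
            = (b * a) * (S.π (h.comp (cpow α m)) - S.π h') := by rw [hh']
          _ = b * (a * (S.π (h.comp (cpow α m)) - S.π h')) := mul_assoc _ _ _
          _ = 0 := by rw [e2, mul_zero]
      have hkey : h = h'.comp (cpow α (-m)) := by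
        ext x
        have p1 : h x * (h x - h' (cpow α (-m) x)) = 0 := by
          have := congrArg (fun F : C(X, ℂ) => F x) z1
          simpa [ContinuousMap.mul_apply, ContinuousMap.sub_apply,
            ContinuousMap.comp_apply] using this
        have p2 : h' (cpow α (-m) x) * (h x - h' (cpow α (-m) x)) = 0 := by
          have := congrArg (fun F : C(X, ℂ) => F (cpow α (-m) x)) z2
          simp only [ContinuousMap.mul_apply, ContinuousMap.sub_apply,
            ContinuousMap.comp_apply, ContinuousMap.zero_apply] at this
          rwa [cpow_cancel] at this
        have h3 : (h x - h' (cpow α (-m) x)) * (h x - h' (cpow α (-m) x)) = 0 := by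
          linear_combination p1 - p2
        have h4 := sub_eq_zero.mp (mul_self_eq_zero.mp h3)
        simpa [ContinuousMap.comp_apply] using h4
      have hΦab : S.ΦC (a * b) = h := by rw [← hh, S.ΦC_π]
      have hΦba : S.ΦC (b * a) = h' := by rw [← hh', S.ΦC_π]
      rw [τ_def, τ_def, hΦab, hΦba, hkey]
      apply Complex.ext
      · show τ₀ (reC (h'.comp (cpow α (-m)))) = τ₀ (reC h')
        have hr : reC (h'.comp (cpow α (-m))) = (reC h').comp (cpow α (-m)) := rfl
        rw [hr, tau0_cpow α τ₀ hinv]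
      · show τ₀ (imC (h'.comp (cpow α (-m)))) = τ₀ (imC h')
        have hr : imC (h'.comp (cpow α (-m))) = (imC h').comp (cpow α (-m)) := rfl
        rw [hr, tau0_cpow α τ₀ hinv]
    · have h1 : S.ΦC (a * b) = 0 := S.ΦC_graded (m + n) _ (S.Esub_mul m n a b ha hb) hmn
      have h2 : S.ΦC (b * a) = 0 := S.ΦC_graded (n + m) _ (S.Esub_mul n m b a hb ha) (by omega)
      rw [τ_def, τ_def, h1, h2]
  -- trace property everywhere, by density
  have htrace : ∀ a b : B, τ (a * b) = τ (b * a) := by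
    have hdense := S.dense_graded
    have key : ∀ a ∈ (⨆ n : ℤ, S.Esub n : Submodule ℂ B),
        ∀ b ∈ (⨆ n : ℤ, S.Esub n : Submodule ℂ B), τ (a * b) = τ (b * a) := by
      intro a ha
      refine Submodule.iSup_induction (motive := fun a => ∀ b ∈ (⨆ n : ℤ, S.Esub n : Submodule ℂ B),
        τ (a * b) = τ (b * a)) _ ha ?_ ?_ ?_
      · intro m a' ha' b hb
        refine Submodule.iSup_induction (motive := fun b => τ (a' * b) = τ (b * a')) _ hb ?_ ?_ ?_
        · intro n b' hb'
          exact htrace_hom m a' ha' n b' hb'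
        · show τ (a' * 0) = τ (0 * a')
          rw [mul_zero, zero_mul]
        · intro x y hx hy
          show τ (a' * (x + y)) = τ ((x + y) * a')
          rw [mul_add, add_mul]
          rw [show τ (a' * x + a' * y) = τ (a' * x) + τ (a' * y) from map_add τA _ _]
          rw [show τ (x * a' + y * a') = τ (x * a') + τ (y * a') from map_add τA _ _]
          rw [hx, hy]
      · intro b _
        show τ (0 * b) = τ (b * 0)
        rw [zero_mul, mul_zero]
      · intro x y hx hy b hb
        show τ ((x + y) * b) = τ (b * (x + y))
        rw [add_mul, mul_add]
        rw [show τ (x * b + y * b) = τ (x * b) + τ (y * b) from map_add τA _ _]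
        rw [show τ (b * x + b * y) = τ (b * x) + τ (b * y) from map_add τA _ _]
        rw [hx b hb, hy b hb]
    have heq : (fun p : B × B => τ (p.1 * p.2)) = fun p : B × B => τ (p.2 * p.1) := by
      apply Continuous.ext_on (hdense.prod hdense)
      · exact τ_cont.comp (continuous_fst.mul continuous_snd)
      · exact τ_cont.comp (continuous_snd.mul continuous_fst)
      · rintro ⟨a, b⟩ ⟨ha, hb⟩
        exact key a ha b hb
    intro a b
    exact congrFun heq (a, b)
  -- pointwise positivity of ΦC on positive elements
  have hpos : ∀ (c : B) (x : X), 0 ≤ (S.ΦC (star c * c) x).re ∧ (S.ΦC (star c * c) x).im = 0 := by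
    intro c x
    set s : B := star c * c with hs
    set φ : B → ℂ := fun b => S.ΦC b x with hφ
    show 0 ≤ (φ s).re ∧ (φ s).im = 0
    have φ_bound : ∀ b, ‖φ b‖ ≤ ‖b‖ := by
      intro b
      have h1 : ‖S.ΦC b x‖ ≤ ‖S.ΦC b‖ := ContinuousMap.norm_coe_le_norm _ x
      exact h1.trans (S.ΦC_contraction b)
    have φ_one : φ 1 = 1 := by rw [hφ]; simp [ΦC1]
    have φ_sub : ∀ y z, φ (y - z) = φ y - φ z := by
      intro y z; simp [hφ, map_sub, ContinuousMap.sub_apply]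
    have φ_addsmul : ∀ (w : ℂ) (y z : B), φ (y + w • z) = φ y + w * φ z := by
      intro w y z
      simp [hφ, map_add, map_smul, ContinuousMap.add_apply, ContinuousMap.smul_apply, smul_eq_mul]
    -- imaginary part vanishes
    have himz : (φ s).im = 0 := by
      have key : ∀ t : ℝ, 2 * (φ s).im * t ≤ ‖s‖ ^ 2 - (φ s).re ^ 2 - (φ s).im ^ 2 := by
        intro t
        set u : B := algebraMap ℂ B (Complex.I * t) with hu
        have hstar_u : star u = -u := by
          rw [hu, ← algebraMap_star_comm]
          have : star (Complex.I * (t : ℂ)) = -(Complex.I * t) := by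
            simp [Complex.star_def]
          rw [this, map_neg]
        have hsa : star s = s := by rw [hs, star_mul, star_star]
        have hsc : star (s + u) * (s + u) = s * s + algebraMap ℂ B ((t : ℂ) ^ 2) := by
          rw [star_add, hsa, hstar_u]
          have hcomm : u * s = s * u := (Algebra.commutes _ _)
          have huu : u * u = algebraMap ℂ B (-(t : ℂ) ^ 2) := by
            rw [hu, ← map_mul]
            congr 1
            have : Complex.I * t * (Complex.I * t) = Complex.I ^ 2 * t ^ 2 := by ring
            rw [this, Complex.I_sq]
            ring
          calc (s + -u) * (s + u) = s * s + s * u - u * s - u * u := by noncomm_ring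
            _ = s * s - u * u := by rw [hcomm]; noncomm_ring
            _ = s * s + algebraMap ℂ B ((t : ℂ) ^ 2) := by
                rw [huu, map_neg, sub_neg_eq_add]
        have hφsu : φ (s + u) = φ s + Complex.I * t := by
          have h1 : s + u = s + (Complex.I * (t : ℂ)) • (1 : B) := by
            rw [hu, Algebra.algebraMap_eq_smul_one]
          rw [h1, φ_addsmul, φ_one, mul_one]
        have hn1 : ‖φ (s + u)‖ ≤ ‖s + u‖ := φ_bound _
        have hn2 : ‖s + u‖ ^ 2 = ‖star (s + u) * (s + u)‖ := by
          rw [CStarRing.norm_star_mul_self, pow_two]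
        have hn3 : ‖star (s + u) * (s + u)‖ ≤ ‖s‖ ^ 2 + t ^ 2 := by
          rw [hsc]
          refine le_trans (norm_add_le _ _) ?_
          have h4 : ‖s * s‖ ≤ ‖s‖ * ‖s‖ := norm_mul_le _ _
          have h5 : ‖algebraMap ℂ B ((t : ℂ) ^ 2)‖ = t ^ 2 := by
            rw [norm_algebraMap']
            rw [show ((t : ℂ) ^ 2) = (((t ^ 2 : ℝ)) : ℂ) by push_cast; ring]
            rw [Complex.norm_real, Real.norm_eq_abs, abs_of_nonneg (sq_nonneg t)]
          rw [h5, pow_two]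
          linarith
        have habs2 : (‖φ s + Complex.I * t‖) ^ 2
            = (φ s).re ^ 2 + ((φ s).im + t) ^ 2 := by
          rw [Complex.sq_norm, Complex.normSq_apply]
          simp
          ring
        have hfin : (φ s).re ^ 2 + ((φ s).im + t) ^ 2 ≤ ‖s‖ ^ 2 + t ^ 2 := by
          rw [← habs2, hφsu] at *
          calc (‖φ s + Complex.I * t‖) ^ 2 ≤ ‖s + u‖ ^ 2 := by
                apply pow_le_pow_left₀ (norm_nonneg _) hn1
            _ = ‖star (s + u) * (s + u)‖ := hn2
            _ ≤ ‖s‖ ^ 2 + t ^ 2 := hn3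
        nlinarith [hfin]
      by_contra him
      set A := ‖s‖ ^ 2 - (φ s).re ^ 2 - (φ s).im ^ 2 with hA
      have h1 := key ((A + 1) / (2 * (φ s).im))
      have h2 : 2 * (φ s).im * ((A + 1) / (2 * (φ s).im)) = A + 1 := by
        field_simp
      rw [h2] at h1
      linarith
    -- real part is nonnegative
    have hsa' : IsSelfAdjoint s := IsSelfAdjoint.star_mul_self c
    have h1 : (0 : B) ≤ s := star_mul_self_nonneg c
    have h2 : s ≤ algebraMap ℝ B ‖s‖ := IsSelfAdjoint.le_algebraMap_norm_self hsa'
    have h3 : (0 : B) ≤ algebraMap ℝ B ‖s‖ - s := sub_nonneg.mpr h2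
    have h4 : algebraMap ℝ B ‖s‖ - s ≤ algebraMap ℝ B ‖s‖ := by
      simpa using sub_le_self (algebraMap ℝ B ‖s‖) h1
    have hble : ‖algebraMap ℝ B ‖s‖ - s‖ ≤ ‖s‖ :=
      (CStarAlgebra.norm_le_iff_le_algebraMap _ (norm_nonneg s) h3).mpr h4
    have hφr : φ (algebraMap ℝ B ‖s‖ - s) = ((‖s‖ : ℝ) : ℂ) - φ s := by
      have ha1 : algebraMap ℝ B ‖s‖ = ((‖s‖ : ℝ) : ℂ) • (1 : B) := by
        rw [IsScalarTower.algebraMap_apply ℝ ℂ B, Algebra.algebraMap_eq_smul_one]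
        norm_num
      rw [φ_sub, ha1]
      have h7 := φ_addsmul ((‖s‖ : ℝ) : ℂ) 0 1
      rw [φ_one, mul_one] at h7
      have h8 : φ (0 + ((‖s‖ : ℝ) : ℂ) • (1 : B)) = φ (((‖s‖ : ℝ) : ℂ) • (1 : B)) := by
        rw [zero_add]
      rw [h8] at h7
      have h9 : φ 0 = 0 := by
        show S.ΦC 0 x = 0
        rw [map_zero, ContinuousMap.zero_apply]
      rw [h9, zero_add] at h7
      rw [h7]
    have habs := φ_bound (algebraMap ℝ B ‖s‖ - s)
    rw [hφr] at habs
    have habs' := habs.trans hble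
    have hsq : (‖((‖s‖ : ℝ) : ℂ) - φ s‖) ^ 2 = (‖s‖ - (φ s).re) ^ 2 := by
      rw [Complex.sq_norm, Complex.normSq_apply]
      simp only [Complex.sub_re, Complex.ofReal_re, Complex.sub_im, Complex.ofReal_im, himz]
      ring
    have h6 : (‖s‖ - (φ s).re) ^ 2 ≤ ‖s‖ ^ 2 := by
      rw [← hsq]
      apply pow_le_pow_left₀ (norm_nonneg _) habs'
    exact ⟨by nlinarith [h6, norm_nonneg s], himz⟩
  -- τ is nonneg and faithful on star c * c
  have τ_nn : ∀ c : B, 0 ≤ (τ (star c * c)).re ∧ (τ (star c * c)).im = 0 := by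
    intro c
    rw [τ_def]
    constructor
    · exact tau0_pos τ₀ hbound hone _ (fun x => (hpos c x).1)
    · show τ₀ (imC (S.ΦC (star c * c))) = 0
      have : imC (S.ΦC (star c * c)) = 0 := by
        ext x; exact (hpos c x).2
      rw [this, map_zero]
  have τ_faithful : ∀ c : B, τ (star c * c) = 0 → c = 0 := by
    intro c hc
    have hre : τ₀ (reC (S.ΦC (star c * c))) = 0 := by
      have := congrArg Complex.re hc
      rw [τ_def] at this
      simpa using this
    have hgz : reC (S.ΦC (star c * c)) = 0 := by
      by_contra hne
      have hy : ∃ y, reC (S.ΦC (star c * c)) y ≠ 0 := by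
        by_contra hall
        push_neg at hall
        exact hne (by ext y; simpa using hall y)
      obtain ⟨y, hy⟩ := hy
      have hypos : 0 < reC (S.ΦC (star c * c)) y :=
        lt_of_le_of_ne ((hpos c y).1) (Ne.symm hy)
      have := tau0_strictpos α τ₀ hmin hbound hone hinv _ (fun z => (hpos c z).1) y hypos
      linarith [hre, this]
    have hΦz : S.ΦC (star c * c) = 0 := by
      ext x
      rw [ContinuousMap.zero_apply]
      apply Complex.ext
      · rw [Complex.zero_re]
        have h5 : reC (S.ΦC (star c * c)) x = (0 : C(X, ℝ)) x := by rw [hgz]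
        rw [ContinuousMap.zero_apply] at h5
        exact h5
      · rw [Complex.zero_im]
        exact (hpos c x).2
    exact S.ΦC_faithful c hΦz
  -- the matrix argument
  intro k a ha
  have hp : (a * star a) * (a * star a) = a * star a := by
    have h1 : (a * star a) * (a * star a) = a * ((star a * a) * star a) := by
      noncomm_ring
    rw [h1, ha, one_mul]
  set q : Matrix (Fin k) (Fin k) B := 1 - a * star a with hq
  have hqsa : star q = q := by
    rw [hq, star_sub, star_one, star_mul, star_star]
  have hqq : q * q = q := by
    rw [hq]
    have : (1 - a * star a) * (1 - a * star a)
        = 1 - a * star a - a * star a + (a * star a) * (a * star a) := by noncomm_ring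
    rw [this, hp]
    abel
  have hsqq : star q * q = q := by rw [hqsa, hqq]
  -- the matrix trace
  have hT1 : ∑ i : Fin k, τ ((1 : Matrix (Fin k) (Fin k) B) i i) = (k : ℂ) := by
    have : ∀ i : Fin k, (1 : Matrix (Fin k) (Fin k) B) i i = 1 := fun i => Matrix.one_apply_eq i
    rw [Finset.sum_congr rfl (fun i _ => by rw [this i, τ_one])]
    simp
  have hTsum : ∀ (m n : Matrix (Fin k) (Fin k) B),
      ∑ i : Fin k, τ ((m * n) i i) = ∑ i : Fin k, ∑ l : Fin k, τ (m i l * n l i) := by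
    intro m n
    refine Finset.sum_congr rfl fun i _ => ?_
    rw [Matrix.mul_apply]
    exact map_sum τA _ _
  have hTcomm : ∑ i : Fin k, τ ((a * star a) i i) = ∑ i : Fin k, τ ((star a * a) i i) := by
    rw [hTsum, hTsum]
    rw [Finset.sum_comm]
    refine Finset.sum_congr rfl fun l _ => Finset.sum_congr rfl fun i _ => ?_
    exact htrace (a i l) ((star a) l i)
  have hTq : ∑ i : Fin k, τ (q i i) = 0 := by
    have h1 : ∀ i, q i i = (1 : Matrix (Fin k) (Fin k) B) i i - (a * star a) i i := by
      intro i; rw [hq, Matrix.sub_apply]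
    have hsplit : ∀ i : Fin k, τ (q i i)
        = τ ((1 : Matrix (Fin k) (Fin k) B) i i) - τ ((a * star a) i i) := by
      intro i
      rw [h1 i]
      exact map_sub τA _ _
    rw [Finset.sum_congr rfl (fun i _ => hsplit i)]
    rw [Finset.sum_sub_distrib, hT1, hTcomm, hTsum]
    have h2 : ∑ i : Fin k, ∑ l : Fin k, τ ((star a) i l * a l i) = (k : ℂ) := by
      rw [← hTsum, ha, hT1]
    rw [h2]
    ring
  have hTq2 : ∑ i : Fin k, ∑ l : Fin k, τ (star (q l i) * q l i) = 0 := by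
    have h1 : ∑ i : Fin k, τ (q i i) = ∑ i : Fin k, τ ((star q * q) i i) := by
      rw [hsqq]
    rw [h1, hTsum] at hTq
    rw [← hTq]
    refine Finset.sum_congr rfl fun i _ => Finset.sum_congr rfl fun l _ => ?_
    rw [Matrix.star_apply]
  have hzero : ∀ i l : Fin k, q l i = 0 := by
    have hre : ∑ i : Fin k, ∑ l : Fin k, (τ (star (q l i) * q l i)).re = 0 := by
      have e1 : (∑ i : Fin k, ∑ l : Fin k, τ (star (q l i) * q l i)).re
          = ∑ i : Fin k, ∑ l : Fin k, (τ (star (q l i) * q l i)).re := by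
        rw [Complex.re_sum]
        exact Finset.sum_congr rfl fun i _ => Complex.re_sum _ _
      rw [← e1, hTq2, Complex.zero_re]
    have hterm : ∀ i ∈ Finset.univ, (0:ℝ) ≤ ∑ l : Fin k, (τ (star (q l i) * q l i)).re :=
      fun i _ => Finset.sum_nonneg fun l _ => (τ_nn (q l i)).1
    have houter := (Finset.sum_eq_zero_iff_of_nonneg hterm).mp hre
    intro i l
    have hinner := (Finset.sum_eq_zero_iff_of_nonneg
      (fun l _ => (τ_nn (q l i)).1)).mp (houter i (Finset.mem_univ i))
    have hzre : (τ (star (q l i) * q l i)).re = 0 := hinner l (Finset.mem_univ l)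
    have hzc : τ (star (q l i) * q l i) = 0 :=
      Complex.ext hzre ((τ_nn (q l i)).2)
    exact τ_faithful _ hzc
  have hqzero : q = 0 := by
    ext i j
    exact hzero j i
  have := sub_eq_zero.mp (hq ▸ hqzero)
  exact this.symm
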